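/- Let (Ω, c) be a network and let u, v, w ∈ Ω be pairwise distinct with c(v, x) = 0 for every x ∉ {u, w} and c(u,v) + c(v,w) > 0. Define a conductance c' on Ω \ {v} by c'(u,w) = c'(w,u) := c(u,w) + c(u,v)c(v,w)/(c(u,v) + c(v,w)) and c'(x,y) := c(x,y) for all other pairs x, y ∈ Ω \ {v}. If h : Ω → ℝ satisfies the mean-value equation at v, i.e. ∑_{x∈Ω} c(v,x)(h(x) − h(v)) = 0, then ∑_{x ∈ Ω\{v}} c'(u,x)(h(x) − h(u)) = ∑_{x ∈ Ω} c(u,x)(h(x) − h(u)). In particular, if in addition ∑_{x∈Ω} c(u,x)(h(x) − h(u)) = 0, then ∑_{x ∈ Ω\{v}} c'(u,x)(h(x) − h(u)) = 0, i.e. harmonicity of h at u is preserved by the series–parallel reduction. -/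
import Mathlib


/-- **Series–parallel reduction preserves harmonicity.**
A network `(Ω, c)` is a finite set with a symmetric nonnegative conductance function.
Let `u, v, w` be pairwise distinct with `c v x = 0` for `x ∉ {u, w}` and
`c u v + c v w > 0`.  Define `c'` on `Ω \ {v}` by merging the series path through `v`
into the edge `{u, w}`.  If `h` satisfies the mean-value equation at `v`, then the
weighted increment sum of `h` at `u` is unchanged by the reduction; in particular
harmonicity of `h` at `u` is preserved. -/
theorem series_parallel_reduction_preserves_harmonicity
    {Ω : Type*} [Fintype Ω] [DecidableEq Ω]
    (c : Ω → Ω → ℝ) (hsymm : ∀ x y, c x y = c y x) (hnonneg : ∀ x y, 0 ≤ c x y)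
    (u v w : Ω) (huv : u ≠ v) (hvw : v ≠ w) (huw : u ≠ w)
    (hv : ∀ x, x ≠ u → x ≠ w → c v x = 0)
    (hpos : 0 < c u v + c v w)
    (c' : Ω → Ω → ℝ)
    (hc'uw : c' u w = c u w + c u v * c v w / (c u v + c v w))
    (hc'wu : c' w u = c' u w)
    (hc'other : ∀ x y, ¬ ((x = u ∧ y = w) ∨ (x = w ∧ y = u)) → c' x y = c x y)
    (h : Ω → ℝ)
    (hharm_v : ∑ x, c v x * (h x - h v) = 0) :
    (∑ x ∈ Finset.univ.erase v, c' u x * (h x - h u)) =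
      ∑ x, c u x * (h x - h u) ∧
    ((∑ x, c u x * (h x - h u)) = 0 →
      (∑ x ∈ Finset.univ.erase v, c' u x * (h x - h u)) = 0) := by
  have hS : c u v + c v w ≠ 0 := ne_of_gt hpos
  -- key relation from harmonicity at v
  have h1 : ∑ x ∈ ({u, w} : Finset Ω), c v x * (h x - h v)
      = ∑ x, c v x * (h x - h v) := by
    refine Finset.sum_subset (Finset.subset_univ _) ?_
    intro x _ hx
    simp only [Finset.mem_insert, Finset.mem_singleton, not_or] at hx
    rw [hv x hx.1 hx.2]; ring
  rw [Finset.sum_pair huw, hharm_v] at h1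
  have key : c u v * (h u - h v) + c v w * (h w - h v) = 0 := by
    rw [hsymm u v]; exact h1
  -- split the sums
  have hwmem : w ∈ Finset.univ.erase v := by
    simp [hvw.symm]
  have hvmem : v ∈ (Finset.univ : Finset Ω) := Finset.mem_univ v
  have hwm2 : w ∈ (Finset.univ : Finset Ω).erase v := hwmem
  have congr_rest : ∑ x ∈ ((Finset.univ.erase v).erase w), c' u x * (h x - h u)
      = ∑ x ∈ ((Finset.univ.erase v).erase w), c u x * (h x - h u) := by
    refine Finset.sum_congr rfl ?_
    intro x hx
    have hxw : x ≠ w := (Finset.mem_erase.mp hx).1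
    rw [hc'other u x (by tauto)]
  have main : (∑ x ∈ Finset.univ.erase v, c' u x * (h x - h u)) =
      ∑ x, c u x * (h x - h u) := by
    rw [← Finset.add_sum_erase _ _ hwmem, congr_rest,
      ← Finset.add_sum_erase _ (fun x => c u x * (h x - h u)) hvmem,
      ← Finset.add_sum_erase _ (fun x => c u x * (h x - h u)) hwm2, hc'uw]
    have : (c u w + c u v * c v w / (c u v + c v w)) * (h w - h u)
        = c u v * (h v - h u) + c u w * (h w - h u) := by
      field_simp
      linear_combination (c u v) * key
    rw [this]; ring
  exact ⟨main, fun h0 => main.trans h0⟩
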